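/- Let B be a Banach space, V, W : B → [1,∞) continuous, β, δ > 0, and define d̂_{β,δ}(x,y) = min(δ⁻¹ρ_W(x,y), 2 + βV(x) + βV(y)). A C¹ function φ : B → ℝ satisfies |φ(x) − φ(y)| ≤ d̂_{β,δ}(x,y) for all x, y if and only if, after possibly adding a constant to φ, one has ‖Dφ(x)‖ ≤ δ⁻¹W(x) and |φ(x)| ≤ 1 + βV(x) for all x. -/

import Mathlib

open MeasureTheory

variable {B : Type*} [NormedAddCommGroup B] [NormedSpace ℝ B] [CompleteSpace B]
  [TopologicalSpace.SeparableSpace B]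

/-- The weighted path (pseudo-)distance associated to a weight `W`. -/
noncomputable def rhoW (W : B → ℝ) (x y : B) : ℝ :=
  sInf { r : ℝ | ∃ γ : ℝ → B, ContDiff ℝ 1 γ ∧ γ 0 = x ∧ γ 1 = y ∧
    r = ∫ s in (0:ℝ)..1, W (γ s) * ‖deriv γ s‖ }

/-- The distance `d̂_{β,δ}(x,y) = δ⁻¹ ρ_W(x,y) ∧ (2 + βV(x) + βV(y))`. -/
noncomputable def dHat (V W : B → ℝ) (β δ : ℝ) (x y : B) : ℝ :=
  min (δ⁻¹ * rhoW W x y) (2 + β * V x + β * V y)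

lemma segment_integral_bound
    (W : B → ℝ) (hWcont : Continuous W)
    (δ : ℝ) (hδ : 0 < δ)
    (φ : B → ℝ) (hφ : ContDiff ℝ 1 φ)
    (hgrad : ∀ x, ‖fderiv ℝ φ x‖ ≤ δ⁻¹ * W x)
    (γ : ℝ → B) (hγ : ContDiff ℝ 1 γ) :
    |φ (γ 1) - φ (γ 0)| ≤ δ⁻¹ * ∫ s in (0:ℝ)..1, W (γ s) * ‖deriv γ s‖ := by
  have hγd : Differentiable ℝ γ := hγ.differentiable one_ne_zero
  have hderivcont : Continuous (deriv γ) := hγ.continuous_deriv le_rfl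
  set f' : ℝ → ℝ := fun s => fderiv ℝ φ (γ s) (deriv γ s) with hf'
  have hf'cont : Continuous f' :=
    ((hφ.continuous_fderiv one_ne_zero).comp hγ.continuous).clm_apply hderivcont
  have hhas : ∀ s ∈ Set.uIcc (0:ℝ) 1, HasDerivAt (fun t => φ (γ t)) (f' s) s := by
    intro s _
    exact ((hφ.differentiable one_ne_zero (γ s)).hasFDerivAt).comp_hasDerivAt s (hγd s).hasDerivAt
  have heq : ∫ s in (0:ℝ)..1, f' s = φ (γ 1) - φ (γ 0) :=
    intervalIntegral.integral_eq_sub_of_hasDerivAt hhas (hf'cont.intervalIntegrable 0 1)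
  rw [← heq]
  calc |∫ s in (0:ℝ)..1, f' s| ≤ ∫ s in (0:ℝ)..1, |f' s| :=
        intervalIntegral.abs_integral_le_integral_abs zero_le_one
    _ ≤ ∫ s in (0:ℝ)..1, δ⁻¹ * (W (γ s) * ‖deriv γ s‖) := by
        apply intervalIntegral.integral_mono_on zero_le_one
          (hf'cont.abs.intervalIntegrable 0 1)
          ((continuous_const.mul ((hWcont.comp hγ.continuous).mul
            hderivcont.norm)).intervalIntegrable 0 1)
        intro s _
        calc |f' s| ≤ ‖fderiv ℝ φ (γ s)‖ * ‖deriv γ s‖ := by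
              rw [← Real.norm_eq_abs]; exact (fderiv ℝ φ (γ s)).le_opNorm _
          _ ≤ δ⁻¹ * W (γ s) * ‖deriv γ s‖ :=
              mul_le_mul_of_nonneg_right (hgrad _) (norm_nonneg _)
          _ = δ⁻¹ * (W (γ s) * ‖deriv γ s‖) := by ring
    _ = δ⁻¹ * ∫ s in (0:ℝ)..1, W (γ s) * ‖deriv γ s‖ := by
        rw [intervalIntegral.integral_const_mul]

/-- a `C¹` function `φ` is 1-Lipschitz with respect to `d̂_{β,δ}` if and
only if (after possibly adding a constant to `φ`) one has `‖Dφ(x)‖ ≤ δ⁻¹ W(x)` and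
`|φ(x)| ≤ 1 + β V(x)` for all `x`. -/
theorem lipschitz_dHat_iff_gradient_and_pointwise_bound
    (V W : B → ℝ) (hVcont : Continuous V) (hWcont : Continuous W)
    (hV1 : ∀ x, 1 ≤ V x) (hW1 : ∀ x, 1 ≤ W x)
    (β δ : ℝ) (hβ : 0 < β) (hδ : 0 < δ)
    (φ : B → ℝ) (hφ : ContDiff ℝ 1 φ) :
    (∀ x y, |φ x - φ y| ≤ dHat V W β δ x y) ↔
      ∃ c : ℝ, (∀ x, ‖fderiv ℝ φ x‖ ≤ δ⁻¹ * W x) ∧ (∀ x, |φ x + c| ≤ 1 + β * V x) := by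
  constructor
  · intro h
    have hbd : ∀ x y, φ x - φ y ≤ 2 + β * V x + β * V y := fun x y =>
      le_trans (le_trans (le_abs_self _) (h x y)) (min_le_right _ _)
    set S : Set ℝ := Set.range (fun x => φ x - 1 - β * V x) with hS
    have hSne : S.Nonempty := ⟨φ 0 - 1 - β * V 0, ⟨0, rfl⟩⟩
    have hSbdd : BddAbove S := ⟨φ 0 + 1 + β * V 0, by
      rintro r ⟨x, rfl⟩; have := hbd x 0; simp only; linarith⟩
    set A := sSup S with hA
    have hA1 : ∀ x, φ x - 1 - β * V x ≤ A := fun x => le_csSup hSbdd ⟨x, rfl⟩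
    have hA2 : ∀ x, A ≤ φ x + 1 + β * V x := fun x =>
      csSup_le hSne (by rintro r ⟨z, rfl⟩; have := hbd z x; simp only; linarith)
    refine ⟨-A, ?_, fun x => abs_le.2 ⟨by have := hA2 x; linarith, by have := hA1 x; linarith⟩⟩
    intro x
    have hWx : (0:ℝ) ≤ δ⁻¹ * W x :=
      mul_nonneg (inv_nonneg.2 hδ.le) (le_trans zero_le_one (hW1 x))
    refine ContinuousLinearMap.opNorm_le_bound _ hWx ?_
    intro v
    rcases eq_or_ne v 0 with rfl | hv
    · simp
    have hvpos : 0 < ‖v‖ := norm_pos_iff.2 hv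
    have hεbound : ∀ ε > 0, ‖fderiv ℝ φ x v‖ ≤ δ⁻¹ * (W x + ε) * ‖v‖ := by
      intro ε hε
      obtain ⟨r, hr, hWr⟩ : ∃ r > 0, ∀ z, dist z x < r → W z < W x + ε := by
        obtain ⟨r, hr, h'⟩ := Metric.continuousAt_iff.1 hWcont.continuousAt ε hε
        exact ⟨r, hr, fun z hz => by
          have h2 := h' hz; rw [Real.dist_eq] at h2
          linarith [(abs_lt.1 h2).2]⟩
      have hslope : ∀ t : ℝ, 0 < t → t * ‖v‖ < r →
          |φ (x + t • v) - φ x| ≤ δ⁻¹ * (W x + ε) * ‖v‖ * t := by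
        intro t ht htr
        set w := t • v with hw
        have hwnorm : ‖w‖ = t * ‖v‖ := by
          rw [hw, norm_smul, Real.norm_eq_abs, abs_of_pos ht]
        set γ : ℝ → B := fun s => x + s • w with hγdef
        have hγc : ContDiff ℝ 1 γ := contDiff_const.add (contDiff_id.smul contDiff_const)
        have hγd : ∀ s : ℝ, HasDerivAt γ w s := fun s => by
          have := ((hasDerivAt_id s).smul_const w).const_add x
          simp only [one_smul] at this; exact this
        have hderiv : ∀ s, deriv γ s = w := fun s => (hγd s).deriv
        have hbddb : BddBelow { r : ℝ | ∃ γ : ℝ → B, ContDiff ℝ 1 γ ∧ γ 0 = x ∧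
            γ 1 = x + w ∧ r = ∫ s in (0:ℝ)..1, W (γ s) * ‖deriv γ s‖ } := by
          refine ⟨0, ?_⟩
          rintro r ⟨g, hg, h0, h1, rfl⟩
          apply intervalIntegral.integral_nonneg zero_le_one
          intro u hu
          exact mul_nonneg (le_trans zero_le_one (hW1 _)) (norm_nonneg _)
        have h1 : rhoW W x (x + w) ≤ ∫ s in (0:ℝ)..1, W (γ s) * ‖deriv γ s‖ :=
          csInf_le hbddb ⟨γ, hγc, by simp [hγdef], by simp [hγdef], rfl⟩
        have h2 : (∫ s in (0:ℝ)..1, W (γ s) * ‖deriv γ s‖) ≤ (W x + ε) * ‖w‖ := by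
          have hmono : ∀ s ∈ Set.Icc (0:ℝ) 1, W (γ s) * ‖deriv γ s‖ ≤ (W x + ε) * ‖w‖ := by
            intro s hs
            rw [hderiv]
            refine mul_le_mul_of_nonneg_right (le_of_lt (hWr _ ?_)) (norm_nonneg _)
            rw [dist_eq_norm]
            have e1 : γ s - x = s • w := by simp [hγdef]
            rw [e1, norm_smul, Real.norm_eq_abs, abs_of_nonneg hs.1]
            calc s * ‖w‖ ≤ 1 * ‖w‖ :=
                  mul_le_mul_of_nonneg_right hs.2 (norm_nonneg _)
              _ = t * ‖v‖ := by rw [one_mul, hwnorm]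
              _ < r := htr
          calc (∫ s in (0:ℝ)..1, W (γ s) * ‖deriv γ s‖)
              ≤ ∫ _s in (0:ℝ)..1, (W x + ε) * ‖w‖ :=
                intervalIntegral.integral_mono_on zero_le_one
                  (((hWcont.comp hγc.continuous).mul
                    ((hγc.continuous_deriv le_rfl).norm)).intervalIntegrable 0 1)
                  (intervalIntegrable_const) hmono
            _ = (W x + ε) * ‖w‖ := by simp
        have h3 := h x (x + w)
        rw [abs_sub_comm] at h3
        calc |φ (x + w) - φ x| ≤ dHat V W β δ x (x + w) := h3
          _ ≤ δ⁻¹ * rhoW W x (x + w) := min_le_left _ _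
          _ ≤ δ⁻¹ * ((W x + ε) * ‖w‖) := by
              apply mul_le_mul_of_nonneg_left _ (inv_nonneg.2 hδ.le)
              exact le_trans h1 h2
          _ = δ⁻¹ * (W x + ε) * ‖v‖ * t := by rw [hwnorm]; ring
      -- limit argument
      have hfd : HasDerivAt (fun t : ℝ => φ (x + t • v)) (fderiv ℝ φ x v) 0 := by
        have h1 : HasDerivAt (fun t : ℝ => x + t • v) v 0 := by
          simpa using ((hasDerivAt_id (0:ℝ)).smul_const v).const_add x
        have h2 : HasFDerivAt φ (fderiv ℝ φ x) (x + (0:ℝ) • v) := by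
          simpa using (hφ.differentiable one_ne_zero x).hasFDerivAt
        exact h2.comp_hasDerivAt 0 h1
      have hs := hasDerivAt_iff_tendsto_slope.1 hfd
      have hs' : Filter.Tendsto (fun t => |slope (fun t : ℝ => φ (x + t • v)) 0 t|)
          (nhdsWithin 0 (Set.Ioi 0)) (nhds |fderiv ℝ φ x v|) :=
        (continuous_abs.tendsto _).comp (hs.mono_left (nhdsWithin_mono 0
          (fun t ht => Set.mem_compl_singleton_iff.2 (ne_of_gt ht))))
      have hev : ∀ᶠ t in nhdsWithin (0:ℝ) (Set.Ioi 0),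
          |slope (fun t : ℝ => φ (x + t • v)) 0 t| ≤ δ⁻¹ * (W x + ε) * ‖v‖ := by
        have hmem : Set.Ioo (0:ℝ) (r / ‖v‖) ∈ nhdsWithin (0:ℝ) (Set.Ioi 0) :=
          Ioo_mem_nhdsGT_of_mem (by constructor <;> [rfl; positivity])
        filter_upwards [hmem] with t ht
        have ht0 : 0 < t := ht.1
        have htr : t * ‖v‖ < r := by
          rw [← lt_div_iff₀ hvpos]; exact ht.2
        have := hslope t ht0 htr
        rw [slope_def_field]
        rw [abs_div]
        rw [div_le_iff₀ (by rw [abs_of_pos (by simpa using ht0)]; simpa using ht0)]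
        simp only [sub_zero, abs_of_pos ht0]
        calc |φ (x + t • v) - φ (x + (0:ℝ) • v)| = |φ (x + t • v) - φ x| := by norm_num
          _ ≤ δ⁻¹ * (W x + ε) * ‖v‖ * t := this
      rw [← Real.norm_eq_abs] at hs'
      exact le_of_tendsto hs' hev
    by_contra hcon
    push_neg at hcon
    set T := δ⁻¹ * W x * ‖v‖ with hT
    set ε := (‖fderiv ℝ φ x v‖ - T) * δ / (2 * ‖v‖) with hεdef
    have hεpos : 0 < ε := by
      apply div_pos (mul_pos (by linarith) hδ) (by positivity)
    have key := hεbound ε hεpos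
    have hd : δ⁻¹ * δ = 1 := inv_mul_cancel₀ hδ.ne'
    have heq : δ⁻¹ * (W x + ε) * ‖v‖ = T + (‖fderiv ℝ φ x v‖ - T) / 2 := by
      have : δ⁻¹ * ε * ‖v‖ = (‖fderiv ℝ φ x v‖ - T) / 2 := by
        rw [hεdef]
        field_simp
      calc δ⁻¹ * (W x + ε) * ‖v‖ = δ⁻¹ * W x * ‖v‖ + δ⁻¹ * ε * ‖v‖ := by ring
        _ = T + (‖fderiv ℝ φ x v‖ - T) / 2 := by rw [this, hT]
    rw [heq] at key
    linarith
  · rintro ⟨c, hgrad, hpt⟩ x y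
    rw [dHat]
    apply le_min
    · rw [rhoW, inv_mul_eq_div, le_div_iff₀ hδ]
      have hSne : { r : ℝ | ∃ γ : ℝ → B, ContDiff ℝ 1 γ ∧ γ 0 = x ∧ γ 1 = y ∧
          r = ∫ s in (0:ℝ)..1, W (γ s) * ‖deriv γ s‖ }.Nonempty := by
        refine ⟨_, fun s => x + s • (y - x),
          contDiff_const.add (contDiff_id.smul contDiff_const), by simp, by simp, rfl⟩
      apply le_csInf hSne
      rintro r ⟨γ, hγc, hγ0, hγ1, rfl⟩
      have hkey := segment_integral_bound W hWcont δ hδ φ hφ hgrad γ hγc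
      rw [hγ0, hγ1, abs_sub_comm] at hkey
      calc |φ x - φ y| * δ ≤ δ⁻¹ * (∫ s in (0:ℝ)..1, W (γ s) * ‖deriv γ s‖) * δ :=
            mul_le_mul_of_nonneg_right hkey hδ.le
        _ = ∫ s in (0:ℝ)..1, W (γ s) * ‖deriv γ s‖ := by
            field_simp
    · have h1 := abs_le.1 (hpt x)
      have h2 := abs_le.1 (hpt y)
      rw [abs_le]
      constructor <;> [linarith [h1.1, h2.2]; linarith [h1.2, h2.1]]
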